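/- Let f : ℝ² → ℝ be bounded and Lipschitz and define Ψ : ℝ² → ℝ² by Ψ(s, τ) = (s, χ(s, τ)) where χ(s, τ) = 𝒳(0, τ; s) is the flow of the ODE γ'(s) = f(s, γ(s)) started at γ(0) = τ. Then Ψ is a bijective, locally biLipschitz homeomorphism of ℝ² onto ℝ². -/

import Mathlib

open Real Set

private lemma flow_fwd {f : ℝ × ℝ → ℝ} {L : NNReal} (hLip : LipschitzWith L f)
    {χ : ℝ → ℝ → ℝ}
    (hode : ∀ τ s, HasDerivAt (fun s => χ s τ) (f (s, χ s τ)) s)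
    {a b : ℝ} (hab : a ≤ b) (τ₁ τ₂ : ℝ) :
    dist (χ b τ₁) (χ b τ₂) ≤ dist (χ a τ₁) (χ a τ₂) * Real.exp (L * (b - a)) := by
  have hv : ∀ t : ℝ, LipschitzWith L (fun x : ℝ => f (t, x)) := fun t => by
    have := hLip.comp (LipschitzWith.prodMk_left (β := ℝ) t)
    simpa [Function.comp_def] using this
  exact dist_le_of_trajectories_ODE (v := fun t x => f (t, x)) hv
    (fun s _ => ((hode τ₁ s).continuousAt).continuousWithinAt)
    (fun s _ => (hode τ₁ s).hasDerivWithinAt)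
    (fun s _ => ((hode τ₂ s).continuousAt).continuousWithinAt)
    (fun s _ => (hode τ₂ s).hasDerivWithinAt)
    le_rfl b ⟨hab, le_rfl⟩

private lemma flow_bwd {f : ℝ × ℝ → ℝ} {L : NNReal} (hLip : LipschitzWith L f)
    {χ : ℝ → ℝ → ℝ}
    (hode : ∀ τ s, HasDerivAt (fun s => χ s τ) (f (s, χ s τ)) s)
    {a b : ℝ} (hab : a ≤ b) (τ₁ τ₂ : ℝ) :
    dist (χ a τ₁) (χ a τ₂) ≤ dist (χ b τ₁) (χ b τ₂) * Real.exp (L * (b - a)) := by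
  have hv : ∀ t : ℝ, LipschitzWith L (fun x : ℝ => -f (a + b - t, x)) := fun t => by
    have h1 : LipschitzWith L (fun x : ℝ => f (a + b - t, x)) := by
      have := hLip.comp (LipschitzWith.prodMk_left (β := ℝ) (a + b - t))
      simpa [Function.comp_def] using this
    apply LipschitzWith.of_dist_le_mul
    intro x y
    simpa [dist_neg_neg] using h1.dist_le_mul x y
  have hF : ∀ τ t, HasDerivAt (fun t => χ (a + b - t) τ)
      (-f (a + b - t, χ (a + b - t) τ)) t := by
    intro τ t
    have h1 : HasDerivAt (fun t : ℝ => a + b - t) (-1) t := by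
      simpa using (hasDerivAt_id t).const_sub (a + b)
    have := (hode τ (a + b - t)).comp t h1
    simpa [Function.comp_def] using this
  have := dist_le_of_trajectories_ODE (v := fun t x => -f (a + b - t, x)) hv
    (f := fun t => χ (a + b - t) τ₁) (g := fun t => χ (a + b - t) τ₂) (a := a) (b := b)
    (fun s _ => ((hF τ₁ s).continuousAt).continuousWithinAt)
    (fun s _ => (hF τ₁ s).hasDerivWithinAt)
    (fun s _ => ((hF τ₂ s).continuousAt).continuousWithinAt)
    (fun s _ => (hF τ₂ s).hasDerivWithinAt)
    le_rfl b ⟨hab, le_rfl⟩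
  simpa using this

private lemma flow_est1 {f : ℝ × ℝ → ℝ} {L : NNReal} (hLip : LipschitzWith L f)
    {χ : ℝ → ℝ → ℝ} (hinit : ∀ τ, χ 0 τ = τ)
    (hode : ∀ τ s, HasDerivAt (fun s => χ s τ) (f (s, χ s τ)) s)
    (s τ₁ τ₂ : ℝ) :
    dist (χ s τ₁) (χ s τ₂) ≤ dist τ₁ τ₂ * Real.exp (L * |s|) := by
  rcases le_total 0 s with hs | hs
  · have := flow_fwd hLip hode hs τ₁ τ₂
    rw [hinit, hinit] at this
    simpa [abs_of_nonneg hs] using this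
  · have := flow_bwd hLip hode hs τ₁ τ₂
    rw [hinit, hinit] at this
    simpa [abs_of_nonpos hs] using this

private lemma flow_est2 {f : ℝ × ℝ → ℝ} {L : NNReal} (hLip : LipschitzWith L f)
    {χ : ℝ → ℝ → ℝ} (hinit : ∀ τ, χ 0 τ = τ)
    (hode : ∀ τ s, HasDerivAt (fun s => χ s τ) (f (s, χ s τ)) s)
    (s τ₁ τ₂ : ℝ) :
    dist τ₁ τ₂ ≤ dist (χ s τ₁) (χ s τ₂) * Real.exp (L * |s|) := by
  rcases le_total 0 s with hs | hs
  · have := flow_bwd hLip hode hs τ₁ τ₂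
    rw [hinit, hinit] at this
    simpa [abs_of_nonneg hs] using this
  · have := flow_fwd hLip hode hs τ₁ τ₂
    rw [hinit, hinit] at this
    simpa [abs_of_nonpos hs] using this

private lemma flow_est_s {f : ℝ × ℝ → ℝ} {M : ℝ} (hBd : ∀ p, |f p| ≤ M)
    {χ : ℝ → ℝ → ℝ}
    (hode : ∀ τ s, HasDerivAt (fun s => χ s τ) (f (s, χ s τ)) s)
    (τ s s' : ℝ) : dist (χ s τ) (χ s' τ) ≤ M * dist s s' := by
  have := convex_univ.norm_image_sub_le_of_norm_hasDerivWithin_le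
    (f := fun s => χ s τ) (f' := fun s => f (s, χ s τ))
    (fun x _ => (hode τ x).hasDerivWithinAt) (fun x _ => by
      simpa [Real.norm_eq_abs] using hBd (x, χ x τ)) (mem_univ s') (mem_univ s)
  simpa [Real.dist_eq, Real.norm_eq_abs] using this

/-- The flow map Ψ(s,τ) = (s, χ(s,τ)) of a bounded Lipschitz vector field is a bijective,
locally biLipschitz homeomorphism of ℝ² onto ℝ². -/
theorem stmt_2 (f : ℝ × ℝ → ℝ) (L : NNReal) (hLip : LipschitzWith L f)
    (M : ℝ) (hBd : ∀ p, |f p| ≤ M)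
    (χ : ℝ → ℝ → ℝ)
    (hinit : ∀ τ, χ 0 τ = τ)
    (hode : ∀ τ s, HasDerivAt (fun s => χ s τ) (f (s, χ s τ)) s) :
    Function.Bijective (fun p : ℝ × ℝ => (p.1, χ p.1 p.2)) ∧
    ∃ Φ : ℝ × ℝ ≃ₜ ℝ × ℝ, (∀ p : ℝ × ℝ, Φ p = (p.1, χ p.1 p.2)) ∧
      ∀ p : ℝ × ℝ, ∃ (U : Set (ℝ × ℝ)) (K : NNReal), p ∈ U ∧ IsOpen U ∧
        LipschitzOnWith K (⇑Φ) U ∧ LipschitzOnWith K (⇑Φ.symm) (⇑Φ '' U) := by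
  have hM0 : 0 ≤ M := (abs_nonneg _).trans (hBd (0, 0))
  set Ψ : ℝ × ℝ → ℝ × ℝ := fun p => (p.1, χ p.1 p.2) with hΨ
  -- injectivity
  have hinj : Function.Injective Ψ := by
    intro p₁ p₂ h
    have h1 : p₁.1 = p₂.1 := (Prod.ext_iff.mp h).1
    have h2 : χ p₁.1 p₁.2 = χ p₁.1 p₂.2 := by
      have h2' : χ p₁.1 p₁.2 = χ p₂.1 p₂.2 := (Prod.ext_iff.mp h).2
      rw [← h1] at h2'; exact h2'
    have := flow_est2 hLip hinit hode p₁.1 p₁.2 p₂.2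
    rw [h2, dist_self, zero_mul] at this
    have : p₁.2 = p₂.2 := by
      have := dist_le_zero.mp this; exact this
    exact Prod.ext h1 this
  -- surjectivity
  have hsurj : Function.Surjective Ψ := by
    rintro ⟨s, y⟩
    have hcont : Continuous fun τ => χ s τ := by
      apply LipschitzWith.continuous (K := Real.toNNReal (Real.exp (L * |s|)))
      apply LipschitzWith.of_dist_le_mul
      intro τ₁ τ₂
      rw [Real.coe_toNNReal _ (Real.exp_pos _).le, mul_comm]
      exact flow_est1 hLip hinit hode s τ₁ τ₂
    have hnear : ∀ τ, |χ s τ - τ| ≤ M * |s| := by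
      intro τ
      have := flow_est_s hBd hode τ s 0
      rw [hinit] at this
      simpa [Real.dist_eq] using this
    set a := y - M * |s| - 1
    set b := y + M * |s| + 1
    have hab : a ≤ b := by
      have : 0 ≤ M * |s| := mul_nonneg hM0 (abs_nonneg _)
      simp only [a, b]; linarith
    have hya : χ s a ≤ y := by
      have := (abs_le.mp (hnear a)).2
      simp only [a] at this ⊢; linarith
    have hyb : y ≤ χ s b := by
      have := (abs_le.mp (hnear b)).1
      simp only [b] at this ⊢; linarith
    have := intermediate_value_Icc hab hcont.continuousOn ⟨hya, hyb⟩
    obtain ⟨τ, _, hτ⟩ := this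
    exact ⟨(s, τ), by simp [hΨ, hτ]⟩
  have hbij : Function.Bijective Ψ := ⟨hinj, hsurj⟩
  set C : ℝ → ℝ := fun R => (1 + M) * Real.exp (L * R) with hC
  have hC1 : ∀ R : ℝ, 0 ≤ R → 1 ≤ C R := by
    intro R hR
    have h1 : (1 : ℝ) ≤ 1 + M := by linarith
    have h2 : (1 : ℝ) ≤ Real.exp (L * R) :=
      Real.one_le_exp (mul_nonneg L.2 hR)
    calc (1:ℝ) = 1 * 1 := by ring
    _ ≤ (1 + M) * Real.exp (L * R) := by
      apply mul_le_mul h1 h2 zero_le_one (by linarith)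
  -- forward Lipschitz estimate on strips
  have fwd : ∀ R : ℝ, 0 ≤ R → ∀ p p' : ℝ × ℝ, |p'.1| ≤ R →
      dist (Ψ p) (Ψ p') ≤ C R * dist p p' := by
    intro R hR p p' hp'
    have hd1 : dist p.1 p'.1 ≤ dist p p' := le_max_left _ _
    have hd2 : dist p.2 p'.2 ≤ dist p p' := le_max_right _ _
    have hdnn : 0 ≤ dist p p' := dist_nonneg
    have hexp : Real.exp (L * |p'.1|) ≤ Real.exp (L * R) :=
      Real.exp_le_exp.mpr (mul_le_mul_of_nonneg_left hp' L.2)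
    rw [Prod.dist_eq]
    apply max_le
    · calc dist (Ψ p).1 (Ψ p').1 = dist p.1 p'.1 := rfl
      _ ≤ dist p p' := hd1
      _ ≤ C R * dist p p' := le_mul_of_one_le_left hdnn (hC1 R hR)
    · have e1 : dist (χ p.1 p.2) (χ p'.1 p.2) ≤ M * dist p.1 p'.1 :=
        flow_est_s hBd hode p.2 p.1 p'.1
      have e2 : dist (χ p'.1 p.2) (χ p'.1 p'.2) ≤ dist p.2 p'.2 * Real.exp (L * |p'.1|) :=
        flow_est1 hLip hinit hode p'.1 p.2 p'.2
      have hexp1 : (1:ℝ) ≤ Real.exp (L * R) := Real.one_le_exp (mul_nonneg L.2 hR)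
      calc dist (Ψ p).2 (Ψ p').2 = dist (χ p.1 p.2) (χ p'.1 p'.2) := rfl
      _ ≤ dist (χ p.1 p.2) (χ p'.1 p.2) + dist (χ p'.1 p.2) (χ p'.1 p'.2) := dist_triangle _ _ _
      _ ≤ M * dist p p' + dist p p' * Real.exp (L * R) := by
          refine add_le_add (e1.trans (mul_le_mul_of_nonneg_left hd1 hM0))
            (e2.trans ?_)
          exact mul_le_mul hd2 hexp (Real.exp_pos _).le hdnn
      _ ≤ C R * dist p p' := by
          simp only [hC]
          nlinarith [mul_nonneg (mul_nonneg hM0 hdnn) (sub_nonneg.mpr hexp1)]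
  -- backward Lipschitz estimate on strips
  have bwd : ∀ R : ℝ, 0 ≤ R → ∀ q q' : ℝ × ℝ, |q.1| ≤ R → ∀ p p', Ψ p = q → Ψ p' = q' →
      dist p p' ≤ C R * dist q q' := by
    intro R hR q q' hq p p' hpq hpq'
    have hp1 : p.1 = q.1 := (Prod.ext_iff.mp hpq).1
    have hp'1 : p'.1 = q'.1 := (Prod.ext_iff.mp hpq').1
    have hp2 : χ q.1 p.2 = q.2 := by rw [← hp1]; exact (Prod.ext_iff.mp hpq).2
    have hp'2 : χ q'.1 p'.2 = q'.2 := by rw [← hp'1]; exact (Prod.ext_iff.mp hpq').2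
    have hd1 : dist q.1 q'.1 ≤ dist q q' := le_max_left _ _
    have hd2 : dist q.2 q'.2 ≤ dist q q' := le_max_right _ _
    have hdnn : 0 ≤ dist q q' := dist_nonneg
    have hexp : Real.exp (L * |q.1|) ≤ Real.exp (L * R) :=
      Real.exp_le_exp.mpr (mul_le_mul_of_nonneg_left hq L.2)
    rw [Prod.dist_eq]
    apply max_le
    · calc dist p.1 p'.1 = dist q.1 q'.1 := by rw [hp1, hp'1]
      _ ≤ dist q q' := hd1
      _ ≤ C R * dist q q' := le_mul_of_one_le_left hdnn (hC1 R hR)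
    · have e0 : dist p.2 p'.2 ≤ dist (χ q.1 p.2) (χ q.1 p'.2) * Real.exp (L * |q.1|) :=
        flow_est2 hLip hinit hode q.1 p.2 p'.2
      have e1 : dist (χ q.1 p.2) (χ q.1 p'.2) ≤ dist q.2 q'.2 + M * dist q.1 q'.1 := by
        calc dist (χ q.1 p.2) (χ q.1 p'.2)
            ≤ dist (χ q.1 p.2) (χ q'.1 p'.2) + dist (χ q'.1 p'.2) (χ q.1 p'.2) :=
              dist_triangle _ _ _
        _ ≤ dist q.2 q'.2 + M * dist q.1 q'.1 := by
            refine add_le_add (le_of_eq (by rw [hp2, hp'2])) ?_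
            have := flow_est_s hBd hode p'.2 q'.1 q.1
            calc dist (χ q'.1 p'.2) (χ q.1 p'.2) ≤ M * dist q'.1 q.1 := this
            _ = M * dist q.1 q'.1 := by rw [dist_comm]
      calc dist p.2 p'.2 ≤ (dist q.2 q'.2 + M * dist q.1 q'.1) * Real.exp (L * |q.1|) := by
            refine e0.trans (mul_le_mul_of_nonneg_right e1 (Real.exp_pos _).le)
      _ ≤ ((1 + M) * dist q q') * Real.exp (L * R) := by
            have h1 : dist q.2 q'.2 + M * dist q.1 q'.1 ≤ (1 + M) * dist q q' := by
              have := mul_le_mul_of_nonneg_left hd1 hM0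
              nlinarith
            have h2 : 0 ≤ dist q.2 q'.2 + M * dist q.1 q'.1 := by
              have := mul_nonneg hM0 (dist_nonneg (x := q.1) (y := q'.1))
              have := dist_nonneg (x := q.2) (y := q'.2); linarith
            exact mul_le_mul h1 hexp (Real.exp_pos _).le (by positivity)
      _ = C R * dist q q' := by simp only [hC]; ring
  set e : ℝ × ℝ ≃ ℝ × ℝ := Equiv.ofBijective Ψ hbij with he
  have heΨ : ∀ p, e p = Ψ p := fun p => rfl
  have hU : ∀ x : ℝ × ℝ, IsOpen {q : ℝ × ℝ | |q.1| < |x.1| + 1} := by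
    intro x
    have : Continuous fun q : ℝ × ℝ => |q.1| := continuous_fst.abs
    exact isOpen_lt this continuous_const
  have lipfwd : ∀ x : ℝ × ℝ, LipschitzOnWith (Real.toNNReal (C (|x.1| + 1))) (⇑e)
      {q : ℝ × ℝ | |q.1| < |x.1| + 1} := by
    intro x
    apply LipschitzOnWith.of_dist_le_mul
    intro p hp p' hp'
    rw [Real.coe_toNNReal _ (le_trans zero_le_one (hC1 _ (by positivity)))]
    exact fwd (|x.1| + 1) (by positivity) p p' (le_of_lt hp')
  have lipbwd : ∀ x : ℝ × ℝ, LipschitzOnWith (Real.toNNReal (C (|x.1| + 1))) (⇑e.symm)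
      {q : ℝ × ℝ | |q.1| < |x.1| + 1} := by
    intro x
    apply LipschitzOnWith.of_dist_le_mul
    intro q hq q' hq'
    rw [Real.coe_toNNReal _ (le_trans zero_le_one (hC1 _ (by positivity)))]
    exact bwd (|x.1| + 1) (by positivity) q q' (le_of_lt hq) (e.symm q) (e.symm q')
      (e.apply_symm_apply q) (e.apply_symm_apply q')
  have hcont : Continuous ⇑e := by
    rw [continuous_iff_continuousAt]
    intro x
    exact ((lipfwd x).continuousOn).continuousAt ((hU x).mem_nhds (by simp [lt_add_one]))
  have hcontsymm : Continuous ⇑e.symm := by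
    rw [continuous_iff_continuousAt]
    intro x
    exact ((lipbwd x).continuousOn).continuousAt ((hU x).mem_nhds (by simp [lt_add_one]))
  refine ⟨hbij, ⟨⟨e, hcont, hcontsymm⟩, fun p => rfl, ?_⟩⟩
  intro p
  refine ⟨{q : ℝ × ℝ | |q.1| < |p.1| + 1}, Real.toNNReal (C (|p.1| + 1)),
    by simp [lt_add_one], hU p, lipfwd p, ?_⟩
  have himg : (⇑e) '' {q : ℝ × ℝ | |q.1| < |p.1| + 1} = {q : ℝ × ℝ | |q.1| < |p.1| + 1} := by
    ext q
    constructor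
    · rintro ⟨x, hx, rfl⟩
      exact hx
    · intro hq
      refine ⟨e.symm q, ?_, e.apply_symm_apply q⟩
      have : (e (e.symm q)).1 = q.1 := by rw [e.apply_symm_apply]
      have h1 : (e.symm q).1 = q.1 := this
      simpa [h1] using hq
  rw [show (⇑(Homeomorph.mk e hcont hcontsymm).symm) = ⇑e.symm from rfl]
  rw [show (⇑(Homeomorph.mk e hcont hcontsymm)) = ⇑e from rfl]
  rw [himg]
  exact lipbwd p
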